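/- Let V be a finite-dimensional real vector space with nondegenerate symmetric bilinear form B, and A ∈ O(V) with det(A + I) ≠ 0. Identifying V ≅ V* via B, the operator on 𝕍 = V ⊕ V* given in block form by A^κ = [[(A+I)/2, (A−I)], [(A−I)/4, (A+I)/2]] is orthogonal with respect to the canonical split pairing on V ⊕ V* (i.e. ⟨A^κ w₁, A^κ w₂⟩ = ⟨w₁,w₂⟩), and the map A ↦ A^κ is a group homomorphism O(V) → O(𝕍). -/

import Mathlib

/-- The operator `A^κ = [[(A+I)/2, A−I],[(A−I)/4, (A+I)/2]]` on `𝕍 = V ⊕ V* ≅ V ⊕ V`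
(second summand identified with `V*` via `B`). -/
noncomputable def Akappa {V : Type*} [AddCommGroup V] [Module ℝ V]
    (A : V →ₗ[ℝ] V) : V × V →ₗ[ℝ] V × V :=
  LinearMap.prod
    ((((1 : ℝ) / 2) • (A + LinearMap.id)).comp (LinearMap.fst ℝ V V) +
      (A - LinearMap.id).comp (LinearMap.snd ℝ V V))
    ((((1 : ℝ) / 4) • (A - LinearMap.id)).comp (LinearMap.fst ℝ V V) +
      (((1 : ℝ) / 2) • (A + LinearMap.id)).comp (LinearMap.snd ℝ V V))

/-- The canonical split pairing on `𝕍 = V ⊕ V* ≅ V ⊕ V` (via `B`):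
`⟨v₁⊕u₁, v₂⊕u₂⟩ = B(u₁,v₂) + B(u₂,v₁)`. -/
def kappaPair {V : Type*} [AddCommGroup V] [Module ℝ V]
    (B : LinearMap.BilinForm ℝ V) (p q : V × V) : ℝ :=
  B p.2 q.1 + B q.2 p.1

/-- For `A ∈ O(V)` with `det(A + I) ≠ 0`, the operator `A^κ` is orthogonal
for the canonical split pairing on `𝕍 = V ⊕ V*`, and `A ↦ A^κ` is a group homomorphism
`O(V) → O(𝕍)` (it preserves composition and identity). -/
theorem stmt19 {V : Type*} [AddCommGroup V] [Module ℝ V] [FiniteDimensional ℝ V]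
    (B : LinearMap.BilinForm ℝ V) (hsymm : B.IsSymm) (hnd : B.Nondegenerate)
    (A : V →ₗ[ℝ] V) (hA : ∀ v w : V, B (A v) (A w) = B v w)
    (hdet : LinearMap.det (A + LinearMap.id) ≠ 0) :
    (∀ w₁ w₂ : V × V, kappaPair B (Akappa A w₁) (Akappa A w₂) = kappaPair B w₁ w₂) ∧
    (∀ A₁ A₂ : V →ₗ[ℝ] V, (∀ v w, B (A₁ v) (A₁ w) = B v w) →
      (∀ v w, B (A₂ v) (A₂ w) = B v w) →
      Akappa (A₁ ∘ₗ A₂) = Akappa A₁ ∘ₗ Akappa A₂) ∧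
    Akappa (LinearMap.id : V →ₗ[ℝ] V) = LinearMap.id := by
  have hs : ∀ x y : V, B x y = B y x := fun x y => hsymm.eq x y
  refine ⟨fun w₁ w₂ => ?_, fun A₁ A₂ _ _ => ?_, ?_⟩
  · simp only [kappaPair, Akappa, LinearMap.prod_apply, Function.prod, LinearMap.add_apply,
      LinearMap.comp_apply, LinearMap.smul_apply, LinearMap.sub_apply, LinearMap.id_apply,
      LinearMap.fst_apply, LinearMap.snd_apply, map_add, map_sub, map_smul, smul_eq_mul,
      LinearMap.map_smul, hA]
    ring_nf
    linear_combination (1/8) * hs (A w₁.1) w₂.1 + (1/8) * hs (A w₂.1) w₁.1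
      - (1/2) * hs w₁.2 w₂.1 - (1/2) * hs w₂.2 w₁.1
      + (1/4) * hs (A w₁.2) w₂.1 - (1/4) * hs (A w₂.1) w₁.2
      - (1/4) * hs (A w₁.1) w₂.2 + (1/4) * hs (A w₂.2) w₁.1
      - (1/2) * hs (A w₁.2) w₂.2 - (1/2) * hs (A w₂.2) w₁.2
  · ext w <;>
    · simp only [Akappa, LinearMap.prod_apply, Function.prod, LinearMap.add_apply,
        LinearMap.comp_apply, LinearMap.smul_apply, LinearMap.sub_apply, LinearMap.id_apply,
        LinearMap.fst_apply, LinearMap.snd_apply, map_add, map_sub, map_smul,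
        LinearMap.inl_apply, LinearMap.inr_apply, map_zero, LinearMap.zero_apply,
        smul_zero, zero_add, add_zero, sub_self]
      module
  · ext w <;>
    · simp only [Akappa, LinearMap.prod_apply, Function.prod, LinearMap.add_apply,
        LinearMap.comp_apply, LinearMap.smul_apply, LinearMap.sub_apply, LinearMap.id_apply,
        LinearMap.fst_apply, LinearMap.snd_apply, LinearMap.inl_apply, LinearMap.inr_apply,
        map_zero, sub_self, map_add, LinearMap.zero_apply, smul_zero, zero_add, add_zero]
      try module
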